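/- First step of the Schwinger–Dyson equation for the N-point function: for every integer M ≥ 3, all colours a₁,…,a_M ∈ {1,2,3} and all pairwise distinct indices p₁,…,p_M ∈ {0,…,N} (with p_{M+1} := p₁), the following identity holds in ℝ[[λ']]: ∂^M Z/(∂J^{a₁}_{p₁p₂} ∂J^{a₂}_{p₂p₃} ⋯ ∂J^{a_M}_{p_M p₁})|_{J=0} = −(λ'/(H_{p₁p₂} V)) Σ_{b,c=1}^{3} σ_{a₁bc} Σ_{n=0}^{N} ∂^{M+1} Z/(∂J^{a₂}_{p₂p₃} ⋯ ∂J^{a_M}_{p_M p₁} ∂J^b_{p₁n} ∂J^c_{np₂})|_{J=0}. -/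

import Mathlib

open MeasureTheory PowerSeries Finset

noncomputable section

/-- Index set for the sources `J^a_{nm}`: a colour `a ∈ {1,2,3}` and a pair of
matrix indices `n, m ∈ {0,…,N}`. -/
abbrev SrcIdx (N : ℕ) := Fin 3 × Fin (N + 1) × Fin (N + 1)

/-- The ring of (smooth-)function coefficients: functions of the sources `J`. -/
abbrev Fn (N : ℕ) := (SrcIdx N → ℝ) → ℝ

/-- `σ_{abc} = 1` if the colours `a, b, c` are pairwise distinct, `0` otherwise. -/
def sigma3 (a b c : Fin 3) : ℝ := if a ≠ b ∧ b ≠ c ∧ a ≠ c then 1 else 0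

/-- Eigenvalues of the external field: `E_m = m/V + μ²/2`. -/
def Eev (N : ℕ) (V μsq : ℝ) (m : Fin (N + 1)) : ℝ := (m : ℝ) / V + μsq / 2

/-- `H_{nm} = E_n + E_m`. -/
def Hev (N : ℕ) (V μsq : ℝ) (n m : Fin (N + 1)) : ℝ := Eev N V μsq n + Eev N V μsq m

/-- The free partition function
`Z_free[J] = exp(Σ_a Σ_{n,m} (V/(2H_{nm})) J^a_{nm} J^a_{mn})`. -/
def Zfree (N : ℕ) (V μsq : ℝ) : Fn N := fun J =>
  Real.exp (∑ a : Fin 3, ∑ n : Fin (N + 1), ∑ m : Fin (N + 1),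
    V / (2 * Hev N V μsq n m) * (J (a, n, m) * J (a, m, n)))

/-- Partial derivative `∂/∂J^a_{nm}` of a function of the sources. -/
def pd (N : ℕ) (i : SrcIdx N) (f : Fn N) : Fn N :=
  fun J => fderiv ℝ f J (Pi.single i 1)

/-- The interaction operator
`D = (1/(3V²)) Σ_{a,b,c} Σ_{n,m,l} σ_{abc} ∂³/(∂J^a_{nm} ∂J^b_{ml} ∂J^c_{ln})`. -/
def Dop (N : ℕ) (V : ℝ) (f : Fn N) : Fn N := fun J =>
  (1 / (3 * V ^ 2)) *
    ∑ a : Fin 3, ∑ b : Fin 3, ∑ c : Fin 3,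
      ∑ n : Fin (N + 1), ∑ m : Fin (N + 1), ∑ l : Fin (N + 1),
        sigma3 a b c * pd N (a, n, m) (pd N (b, m, l) (pd N (c, l, n) f)) J

/-- The partition function `Z[J] = Σ_k ((−1)^k/k!) λ'^k D^k Z_free[J]` as a formal
power series in the coupling constant `λ'` with function coefficients. -/
def Zser (N : ℕ) (V μsq : ℝ) : PowerSeries (Fn N) :=
  PowerSeries.mk fun k => fun J =>
    ((-1 : ℝ) ^ k / (Nat.factorial k : ℝ)) * (Dop N V)^[k] (Zfree N V μsq) J

/-- Partial derivative `∂/∂J^a_{nm}` acting coefficientwise on a formal power series. -/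
def Pd (N : ℕ) (i : SrcIdx N) (S : PowerSeries (Fn N)) : PowerSeries (Fn N) :=
  PowerSeries.mk fun k => pd N i (PowerSeries.coeff (R := Fn N) k S)

/-- Coefficientwise multiplication by a function of the sources (in particular by a
coordinate function or by a real constant). -/
def Cf (N : ℕ) (g : Fn N) : PowerSeries (Fn N) := PowerSeries.C (R := Fn N) g

/-- Evaluation of every coefficient at `J = 0`, giving a series in `ℝ[[λ']]`. -/
def ev0 (N : ℕ) : PowerSeries (Fn N) →+* PowerSeries ℝ :=
  PowerSeries.map (Pi.evalRingHom (fun _ : SrcIdx N → ℝ => ℝ) 0)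

end

noncomputable section SD
open MvPolynomial

variable {N : ℕ} (V μsq : ℝ)

abbrev Pol (N : ℕ) := MvPolynomial (SrcIdx N) ℝ

def mir {N : ℕ} (i : SrcIdx N) : SrcIdx N := (i.1, i.2.2, i.2.1)

def Hc {N : ℕ} (V μsq : ℝ) (i : SrcIdx N) : ℝ := Hev N V μsq i.2.1 i.2.2

@[simp] lemma mir_mir {N : ℕ} (i : SrcIdx N) : mir (mir i) = i := rfl

lemma Hc_mir {N : ℕ} (V μsq : ℝ) (i : SrcIdx N) : Hc V μsq (mir i) = Hc V μsq i := by
  simp [Hc, mir, Hev, add_comm]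

/-- symbolic version of the derivative `∂_i` acting on `P · Z_free`. -/
def dd (i : SrcIdx N) (P : Pol N) : Pol N :=
  pderiv i P + MvPolynomial.C (V / Hc V μsq i) * (X (mir i) * P)

lemma dd_add (i : SrcIdx N) (P Q : Pol N) :
    dd V μsq i (P + Q) = dd V μsq i P + dd V μsq i Q := by
  simp [dd]; ring

@[simp] lemma dd_zero (i : SrcIdx N) : dd V μsq i 0 = 0 := by simp [dd]

lemma dd_Cmul (i : SrcIdx N) (r : ℝ) (P : Pol N) :
    dd V μsq i (MvPolynomial.C r * P) = MvPolynomial.C r * dd V μsq i P := by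
  simp [dd, pderiv_C_mul]; ring

lemma dd_sum {α : Type*} (i : SrcIdx N) (s : Finset α) (f : α → Pol N) :
    dd V μsq i (∑ x ∈ s, f x) = ∑ x ∈ s, dd V μsq i (f x) := by
  classical
  induction s using Finset.cons_induction with
  | empty => simp
  | cons x s hx ih => simp [Finset.sum_insert hx, dd_add, ih]

lemma pderiv_comm' {σ R : Type*} [CommSemiring R] [DecidableEq σ] (i j : σ)
    (P : MvPolynomial σ R) :
    pderiv i (pderiv j P) = pderiv j (pderiv i P) := by
  induction P using MvPolynomial.induction_on with
  | C a => simp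
  | add p q hp hq => simp [hp, hq]
  | mul_X p k ih =>
      simp [pderiv_mul, ih, Pi.single_apply, apply_ite (pderiv i), apply_ite (pderiv j)]
      ring

lemma dd_comm (i j : SrcIdx N) (P : Pol N) :
    dd V μsq i (dd V μsq j P) = dd V μsq j (dd V μsq i P) := by
  classical
  simp only [dd, map_add, pderiv_C_mul, pderiv_mul, pderiv_comm' i j]
  by_cases h : i = mir j
  · subst h
    simp [Hc_mir, mir_mir]
    ring
  · have h1 : mir j ≠ i := fun hh => h hh.symm
    have h2 : mir i ≠ j := fun hh => h (by rw [← hh, mir_mir])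
    simp [pderiv_X_of_ne h1, pderiv_X_of_ne h2]
    ring

lemma dd_X (i k : SrcIdx N) (P : Pol N) :
    dd V μsq i (X k * P) = X k * dd V μsq i P + (if i = k then P else 0) := by
  classical
  unfold dd
  rw [pderiv_mul]
  by_cases h : i = k
  · subst h; simp; ring
  · simp [pderiv_X_of_ne (Ne.symm h), h]; ring

lemma dd_ite (i : SrcIdx N) (c : Prop) [Decidable c] (P : Pol N) :
    dd V μsq i (if c then P else 0) = if c then dd V μsq i P else 0 := by
  split_ifs <;> simp

lemma sigma3_rot (a b c : Fin 3) : sigma3 a b c = sigma3 c a b := by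
  unfold sigma3
  split_ifs with h1 h2 h2 <;> first | rfl | (exfalso; tauto)

/-- symbolic version of the interaction operator `D`. -/
def DD {N : ℕ} (V μsq : ℝ) (P : Pol N) : Pol N :=
  MvPolynomial.C (1 / (3 * V ^ 2)) *
    ∑ a : Fin 3, ∑ b : Fin 3, ∑ c : Fin 3,
      ∑ n : Fin (N + 1), ∑ m : Fin (N + 1), ∑ l : Fin (N + 1),
        MvPolynomial.C (sigma3 a b c) *
          dd V μsq (a, n, m) (dd V μsq (b, m, l) (dd V μsq (c, l, n) P))

lemma DD_add (P Q : Pol N) : DD V μsq (P + Q) = DD V μsq P + DD V μsq Q := by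
  simp [DD, dd_add, mul_add, Finset.sum_add_distrib]

@[simp] lemma DD_zero : DD V μsq (0 : Pol N) = 0 := by
  have h := DD_add V μsq (0 : Pol N) 0
  simp only [zero_add] at h
  exact left_eq_add.mp h

set_option maxHeartbeats 2000000 in
lemma DD_Cmul (r : ℝ) (P : Pol N) :
    DD V μsq (MvPolynomial.C r * P) = MvPolynomial.C r * DD V μsq P := by
  unfold DD
  simp only [dd_Cmul, Finset.mul_sum]
  refine Finset.sum_congr rfl fun a _ => Finset.sum_congr rfl fun b _ =>
      Finset.sum_congr rfl fun c _ => Finset.sum_congr rfl fun n _ =>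
      Finset.sum_congr rfl fun m _ => Finset.sum_congr rfl fun l _ => ?_
  ring

lemma DD_sum {α : Type*} (s : Finset α) (f : α → Pol N) :
    DD V μsq (∑ x ∈ s, f x) = ∑ x ∈ s, DD V μsq (f x) := by
  classical
  induction s using Finset.cons_induction with
  | empty => simp
  | cons x s hx ih =>
      rw [Finset.sum_cons, Finset.sum_cons, DD_add, ih]

lemma dd_DD_comm (i : SrcIdx N) (P : Pol N) :
    dd V μsq i (DD V μsq P) = DD V μsq (dd V μsq i P) := by
  simp only [DD, dd_Cmul, dd_sum, dd_comm V μsq i]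

/-- symbolic version of the commutator operator appearing in the SD equation. -/
def TAop {N : ℕ} (V μsq : ℝ) (a1 : Fin 3) (p1 p2 : Fin (N + 1)) (Q : Pol N) : Pol N :=
  ∑ b : Fin 3, ∑ c : Fin 3,
    MvPolynomial.C (sigma3 a1 b c) *
      ∑ n : Fin (N + 1), dd V μsq (b, p1, n) (dd V μsq (c, n, p2) Q)

lemma TAop_DD (a1 : Fin 3) (p1 p2 : Fin (N + 1)) (Q : Pol N) :
    TAop V μsq a1 p1 p2 (DD V μsq Q) = DD V μsq (TAop V μsq a1 p1 p2 Q) := by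
  simp only [TAop, dd_DD_comm, DD_sum, DD_Cmul]

lemma DD_X_mul (a1 : Fin 3) (p1 p2 : Fin (N + 1)) (Q : Pol N) :
    DD V μsq (MvPolynomial.X ((a1, p2, p1) : SrcIdx N) * Q)
      = MvPolynomial.X ((a1, p2, p1) : SrcIdx N) * DD V μsq Q
        + MvPolynomial.C (1 / V ^ 2) * TAop V μsq a1 p1 p2 Q := by
  classical
  set T1 : Pol N := ∑ b : Fin 3, ∑ c : Fin 3, ∑ n : Fin (N + 1),
      MvPolynomial.C (sigma3 a1 b c) * dd V μsq (b, p1, n) (dd V μsq (c, n, p2) Q) with hT1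
  set S : Pol N := ∑ a : Fin 3, ∑ b : Fin 3, ∑ c : Fin 3,
      ∑ n : Fin (N + 1), ∑ m : Fin (N + 1), ∑ l : Fin (N + 1),
        MvPolynomial.C (sigma3 a b c) *
          dd V μsq (a, n, m) (dd V μsq (b, m, l) (dd V μsq (c, l, n) Q)) with hS
  have hsummand : ∀ (a b c : Fin 3) (n m l : Fin (N + 1)),
      dd V μsq (a, n, m) (dd V μsq (b, m, l) (dd V μsq (c, l, n)
          (MvPolynomial.X ((a1, p2, p1) : SrcIdx N) * Q)))
        = MvPolynomial.X ((a1, p2, p1) : SrcIdx N) *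
              dd V μsq (a, n, m) (dd V μsq (b, m, l) (dd V μsq (c, l, n) Q))
            + (((if ((a, n, m) : SrcIdx N) = (a1, p2, p1) then
                  dd V μsq (b, m, l) (dd V μsq (c, l, n) Q) else 0)
              + (if ((b, m, l) : SrcIdx N) = (a1, p2, p1) then
                  dd V μsq (a, n, m) (dd V μsq (c, l, n) Q) else 0))
              + (if ((c, l, n) : SrcIdx N) = (a1, p2, p1) then
                  dd V μsq (a, n, m) (dd V μsq (b, m, l) Q) else 0)) := by
    intro a b c n m l
    simp only [dd_X, dd_add, dd_ite]
    ring
  have hSA : (∑ a : Fin 3, ∑ b : Fin 3, ∑ c : Fin 3,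
      ∑ n : Fin (N + 1), ∑ m : Fin (N + 1), ∑ l : Fin (N + 1),
        MvPolynomial.C (sigma3 a b c) * (if ((a, n, m) : SrcIdx N) = (a1, p2, p1) then
          dd V μsq (b, m, l) (dd V μsq (c, l, n) Q) else 0)) = T1 := by
    simp only [hT1, Prod.mk.injEq, ite_and, mul_ite, mul_zero,
      Finset.sum_ite_irrel, Finset.sum_const_zero, Finset.sum_ite_eq',
      Finset.mem_univ, if_true]
  have hSB : (∑ a : Fin 3, ∑ b : Fin 3, ∑ c : Fin 3,
      ∑ n : Fin (N + 1), ∑ m : Fin (N + 1), ∑ l : Fin (N + 1),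
        MvPolynomial.C (sigma3 a b c) * (if ((b, m, l) : SrcIdx N) = (a1, p2, p1) then
          dd V μsq (a, n, m) (dd V μsq (c, l, n) Q) else 0)) = T1 := by
    simp only [hT1, Prod.mk.injEq, ite_and, mul_ite, mul_zero,
      Finset.sum_ite_irrel, Finset.sum_const_zero, Finset.sum_ite_eq',
      Finset.mem_univ, if_true]
    rw [Finset.sum_comm]
    refine Finset.sum_congr rfl fun c _ => Finset.sum_congr rfl fun a _ =>
      Finset.sum_congr rfl fun n _ => ?_
    rw [dd_comm, sigma3_rot a a1 c, sigma3_rot c a a1]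
  have hSC : (∑ a : Fin 3, ∑ b : Fin 3, ∑ c : Fin 3,
      ∑ n : Fin (N + 1), ∑ m : Fin (N + 1), ∑ l : Fin (N + 1),
        MvPolynomial.C (sigma3 a b c) * (if ((c, l, n) : SrcIdx N) = (a1, p2, p1) then
          dd V μsq (a, n, m) (dd V μsq (b, m, l) Q) else 0)) = T1 := by
    simp only [hT1, Prod.mk.injEq, ite_and, mul_ite, mul_zero,
      Finset.sum_ite_irrel, Finset.sum_const_zero, Finset.sum_ite_eq',
      Finset.mem_univ, if_true]
    refine Finset.sum_congr rfl fun a _ => Finset.sum_congr rfl fun b _ =>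
      Finset.sum_congr rfl fun m _ => ?_
    rw [sigma3_rot a b a1]
  have hS0 : (∑ a : Fin 3, ∑ b : Fin 3, ∑ c : Fin 3,
      ∑ n : Fin (N + 1), ∑ m : Fin (N + 1), ∑ l : Fin (N + 1),
        MvPolynomial.C (sigma3 a b c) * (MvPolynomial.X ((a1, p2, p1) : SrcIdx N) *
          dd V μsq (a, n, m) (dd V μsq (b, m, l) (dd V μsq (c, l, n) Q))))
      = MvPolynomial.X ((a1, p2, p1) : SrcIdx N) * S := by
    simp only [hS, Finset.mul_sum]
    refine Finset.sum_congr rfl fun a _ => Finset.sum_congr rfl fun b _ =>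
      Finset.sum_congr rfl fun c _ => Finset.sum_congr rfl fun n _ =>
      Finset.sum_congr rfl fun m _ => Finset.sum_congr rfl fun l _ => ?_
    ring
  unfold DD
  simp only [hsummand, mul_add, Finset.sum_add_distrib]
  rw [hS0, hSA, hSB, hSC]
  have hTA : TAop V μsq a1 p1 p2 Q = T1 := by
    simp only [TAop, hT1, Finset.mul_sum]
  rw [hTA, ← hS]
  have h3 : (1 / V ^ 2 : ℝ) = 3 * (1 / (3 * V ^ 2)) := by
    rcases eq_or_ne V 0 with h | h
    · simp [h]
    · field_simp
  rw [h3, map_mul, map_ofNat]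
  ring

lemma dd_DD_iter (i : SrcIdx N) (k : ℕ) (P : Pol N) :
    dd V μsq i ((DD V μsq)^[k] P) = (DD V μsq)^[k] (dd V μsq i P) := by
  induction k generalizing P with
  | zero => rfl
  | succ k ih =>
      rw [Function.iterate_succ_apply', Function.iterate_succ_apply',
        dd_DD_comm, ih]

lemma DD_iter_Cmul (r : ℝ) (k : ℕ) (P : Pol N) :
    (DD V μsq)^[k] (MvPolynomial.C r * P) = MvPolynomial.C r * (DD V μsq)^[k] P := by
  induction k generalizing P with
  | zero => rfl
  | succ k ih =>
      rw [Function.iterate_succ_apply, DD_Cmul, ih, ← Function.iterate_succ_apply]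

lemma DD_pow_X (a1 : Fin 3) (p1 p2 : Fin (N + 1)) (k : ℕ) :
    (DD V μsq)^[k + 1] (MvPolynomial.X ((a1, p2, p1) : SrcIdx N))
      = MvPolynomial.X ((a1, p2, p1) : SrcIdx N) * (DD V μsq)^[k + 1] 1
        + MvPolynomial.C (((k : ℝ) + 1) / V ^ 2) *
            TAop V μsq a1 p1 p2 ((DD V μsq)^[k] 1) := by
  induction k with
  | zero =>
      rw [Function.iterate_one]
      have h := DD_X_mul V μsq a1 p1 p2 (1 : Pol N)
      rw [mul_one] at h
      rw [h]
      norm_num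
  | succ k ih =>
      rw [Function.iterate_succ_apply', ih, DD_add, DD_Cmul, ← TAop_DD,
        ← Function.iterate_succ_apply' (DD V μsq) k 1, DD_X_mul V μsq a1 p1 p2,
        ← Function.iterate_succ_apply' (DD V μsq) (k + 1) 1]
      have hc : (MvPolynomial.C (((k : ℝ) + 1) / V ^ 2) : Pol N)
          = MvPolynomial.C ((k : ℝ) + 1) * MvPolynomial.C (1 / V ^ 2) := by
        rw [← map_mul]; congr 1; ring
      have hc2 : (MvPolynomial.C (((k : ℝ) + 1 + 1) / V ^ 2) : Pol N)
          = (MvPolynomial.C ((k : ℝ) + 1) + 1) * MvPolynomial.C (1 / V ^ 2) := by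
        rw [← (MvPolynomial.C : ℝ →+* Pol N).map_one, ← map_add, ← map_mul]
        congr 1; ring
      push_cast
      rw [hc, hc2]
      ring

/-! ### fold lemmas -/

lemma fold_dd_comm (i : SrcIdx N) (l : List (SrcIdx N)) (P : Pol N) :
    dd V μsq i (l.foldr (dd V μsq) P) = l.foldr (dd V μsq) (dd V μsq i P) := by
  induction l with
  | nil => rfl
  | cons a l ih => rw [List.foldr_cons, List.foldr_cons, dd_comm, ih]

lemma fold_add (l : List (SrcIdx N)) (P Q : Pol N) :
    l.foldr (dd V μsq) (P + Q) = l.foldr (dd V μsq) P + l.foldr (dd V μsq) Q := by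
  induction l with
  | nil => rfl
  | cons a l ih => rw [List.foldr_cons, List.foldr_cons, List.foldr_cons, ih, dd_add]

lemma fold_Cmul (l : List (SrcIdx N)) (r : ℝ) (P : Pol N) :
    l.foldr (dd V μsq) (MvPolynomial.C r * P)
      = MvPolynomial.C r * l.foldr (dd V μsq) P := by
  induction l with
  | nil => rfl
  | cons a l ih => rw [List.foldr_cons, List.foldr_cons, ih, dd_Cmul]

lemma fold_sum {α : Type*} (l : List (SrcIdx N)) (s : Finset α) (f : α → Pol N) :
    l.foldr (dd V μsq) (∑ x ∈ s, f x) = ∑ x ∈ s, l.foldr (dd V μsq) (f x) := by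
  induction l with
  | nil => rfl
  | cons a l ih =>
      rw [List.foldr_cons, ih, dd_sum]
      exact Finset.sum_congr rfl fun x _ => by rw [List.foldr_cons]

lemma fold_X_notmem (l : List (SrcIdx N)) (j : SrcIdx N) (h : j ∉ l) (P : Pol N) :
    l.foldr (dd V μsq) (MvPolynomial.X j * P)
      = MvPolynomial.X j * l.foldr (dd V μsq) P := by
  induction l with
  | nil => rfl
  | cons a l ih =>
      have haj : a ≠ j := fun hh => h (by simp [hh])
      have hl : j ∉ l := fun hh => h (List.mem_cons_of_mem _ hh)
      rw [List.foldr_cons, ih hl, List.foldr_cons, dd_X, if_neg haj, add_zero]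

lemma dd_one (i : SrcIdx N) :
    dd V μsq i (1 : Pol N) = MvPolynomial.C (V / Hc V μsq i) * MvPolynomial.X (mir i) := by
  simp [dd]

/-! ### analytic layer -/

lemma eval_hasFDerivAt (P : Pol N) (J : SrcIdx N → ℝ) :
    HasFDerivAt (fun J : SrcIdx N → ℝ => MvPolynomial.eval J P)
      (∑ k : SrcIdx N, MvPolynomial.eval J (MvPolynomial.pderiv k P) •
        ContinuousLinearMap.proj (R := ℝ) (φ := fun _ : SrcIdx N => ℝ) k) J := by
  classical
  induction P using MvPolynomial.induction_on with
  | C a =>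
      simp only [MvPolynomial.eval_C, MvPolynomial.pderiv_C, map_zero, zero_smul,
        Finset.sum_const_zero]
      exact hasFDerivAt_const a J
  | add p q hp hq =>
      have h : (fun J : SrcIdx N → ℝ => MvPolynomial.eval J (p + q))
          = fun J => MvPolynomial.eval J p + MvPolynomial.eval J q := by
        funext J; rw [map_add]
      rw [h]
      have := hp.add hq
      refine HasFDerivAt.congr_fderiv this (Eq.symm ?_)
      simp only [map_add, add_smul, Finset.sum_add_distrib]
  | mul_X p j ih =>
      have h : (fun J : SrcIdx N → ℝ => MvPolynomial.eval J (p * MvPolynomial.X j))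
          = fun J => MvPolynomial.eval J p * J j := by
        funext J; simp
      rw [h]
      have hj : HasFDerivAt (fun J : SrcIdx N → ℝ => J j)
          (ContinuousLinearMap.proj (R := ℝ) (φ := fun _ : SrcIdx N => ℝ) j) J :=
        hasFDerivAt_apply j J
      have := ih.mul hj
      refine HasFDerivAt.congr_fderiv this (Eq.symm ?_)
      ext v
      simp only [ContinuousLinearMap.coe_sum', Finset.sum_apply,
        ContinuousLinearMap.coe_smul', Pi.smul_apply, ContinuousLinearMap.proj_apply,
        ContinuousLinearMap.add_apply, MvPolynomial.pderiv_mul, MvPolynomial.pderiv_X,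
        map_add, map_mul, MvPolynomial.eval_X, Pi.single_apply, smul_eq_mul,
        apply_ite (MvPolynomial.eval J), map_one, map_zero, mul_ite, mul_zero, mul_one,
        ite_mul, zero_mul, add_mul, Finset.sum_add_distrib, Finset.sum_ite_eq,
        Finset.mem_univ, if_true, Finset.mul_sum]
      rw [add_comm]
      refine congrArg₂ (· + ·) rfl ?_
      exact Finset.sum_congr rfl fun x _ => by ring

/-- the quadratic form of the free action, as a polynomial. -/
def Qp (N : ℕ) (V μsq : ℝ) : Pol N :=
  ∑ a : Fin 3, ∑ n : Fin (N + 1), ∑ m : Fin (N + 1),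
    MvPolynomial.C (V / (2 * Hev N V μsq n m)) *
      (MvPolynomial.X ((a, n, m) : SrcIdx N) * MvPolynomial.X ((a, m, n) : SrcIdx N))

lemma Zfree_eq (J : SrcIdx N → ℝ) :
    Zfree N V μsq J = Real.exp (MvPolynomial.eval J (Qp N V μsq)) := by
  simp [Zfree, Qp, map_sum]

lemma Hev_comm (n m : Fin (N + 1)) : Hev N V μsq n m = Hev N V μsq m n := by
  simp [Hev, add_comm]

lemma eval_pderiv_Qp (i : SrcIdx N) (J : SrcIdx N → ℝ) :
    MvPolynomial.eval J (MvPolynomial.pderiv i (Qp N V μsq))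
      = V / Hc V μsq i * J (mir i) := by
  classical
  obtain ⟨a0, n0, m0⟩ := i
  simp only [Qp, map_sum, MvPolynomial.pderiv_C_mul, MvPolynomial.pderiv_mul,
    MvPolynomial.pderiv_C, MvPolynomial.pderiv_X, Pi.single_apply, map_mul, map_add,
    MvPolynomial.eval_C, MvPolynomial.eval_X, apply_ite (MvPolynomial.eval J),
    map_one, map_zero, Prod.mk.injEq, ite_and, mul_ite, mul_zero, mul_one, one_mul,
    zero_mul, ite_mul, mul_add, add_mul, zero_add, add_zero, Finset.sum_add_distrib,
    Finset.sum_ite_irrel, Finset.sum_const_zero, Finset.sum_ite_eq,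
    Finset.sum_ite_eq', Finset.mem_univ, if_true, Hc, mir]
  rw [Hev_comm V μsq m0 n0]
  have h2 : V / (2 * Hev N V μsq n0 m0) + V / (2 * Hev N V μsq n0 m0)
      = V / Hev N V μsq n0 m0 := by
    rw [← add_div, ← two_mul, mul_div_mul_left _ _ (two_ne_zero)]
  linear_combination (J ((a0, m0, n0) : SrcIdx N)) * h2

/-- functions of the form `P · Z_free`. -/
def Phi (N : ℕ) (V μsq : ℝ) (P : Pol N) : Fn N :=
  fun J => MvPolynomial.eval J P * Zfree N V μsq J

lemma pd_Phi (i : SrcIdx N) (P : Pol N) :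
    pd N i (Phi N V μsq P) = Phi N V μsq (dd V μsq i P) := by
  classical
  funext J
  have hZfun : Zfree N V μsq = fun J => Real.exp (MvPolynomial.eval J (Qp N V μsq)) :=
    funext fun J => Zfree_eq V μsq J
  have hZ : HasFDerivAt (Zfree N V μsq)
      (Real.exp (MvPolynomial.eval J (Qp N V μsq)) •
        ∑ k : SrcIdx N, MvPolynomial.eval J (MvPolynomial.pderiv k (Qp N V μsq)) •
          ContinuousLinearMap.proj (R := ℝ) (φ := fun _ : SrcIdx N => ℝ) k) J := by
    rw [hZfun]
    exact (eval_hasFDerivAt (Qp N V μsq) J).exp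
  have hP := eval_hasFDerivAt P J
  have hprod := hP.mul hZ
  have happ : ∀ g : SrcIdx N → ℝ,
      (∑ k : SrcIdx N, g k • ContinuousLinearMap.proj (R := ℝ)
        (φ := fun _ : SrcIdx N => ℝ) k) (Pi.single i 1) = g i := by
    intro g
    simp [ContinuousLinearMap.coe_sum', Finset.sum_apply, Pi.single_apply,
      mul_ite, mul_zero, mul_one]
  show fderiv ℝ (Phi N V μsq P) J (Pi.single i 1) = _
  have hPhi : Phi N V μsq P = fun J => MvPolynomial.eval J P * Zfree N V μsq J := rfl
  erw [hPhi, hprod.fderiv]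
  simp only [ContinuousLinearMap.add_apply, ContinuousLinearMap.smul_apply, smul_eq_mul]
  rw [happ, happ, eval_pderiv_Qp]
  show _ = MvPolynomial.eval J (dd V μsq i P) * Zfree N V μsq J
  rw [← Zfree_eq]
  simp only [dd, map_add, map_mul, MvPolynomial.eval_C, MvPolynomial.eval_X]
  ring

set_option maxHeartbeats 1000000 in
lemma Dop_Phi (P : Pol N) :
    Dop N V (Phi N V μsq P) = Phi N V μsq (DD V μsq P) := by
  funext J
  show (1 / (3 * V ^ 2)) * _ = _
  simp only [pd_Phi]
  unfold Phi DD
  simp only [map_mul, map_sum, MvPolynomial.eval_C, Finset.sum_mul, Finset.mul_sum]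
  refine Finset.sum_congr rfl fun a _ => Finset.sum_congr rfl fun b _ =>
    Finset.sum_congr rfl fun c _ => Finset.sum_congr rfl fun n _ =>
    Finset.sum_congr rfl fun m _ => Finset.sum_congr rfl fun l _ => by ring

lemma Dop_iter (k : ℕ) :
    (Dop N V)^[k] (Zfree N V μsq) = Phi N V μsq ((DD V μsq)^[k] 1) := by
  induction k with
  | zero =>
      funext J
      simp [Phi]
  | succ k ih =>
      rw [Function.iterate_succ_apply', ih, Dop_Phi,
        ← Function.iterate_succ_apply' (DD V μsq) k 1]

/-! ### power series plumbing -/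

lemma coeff_fold_Pd (l : List (SrcIdx N)) (S : PowerSeries (Fn N)) (k : ℕ) :
    (PowerSeries.coeff (R := Fn N) k) (l.foldr (Pd N) S)
      = l.foldr (pd N) ((PowerSeries.coeff (R := Fn N) k) S) := by
  induction l with
  | nil => rfl
  | cons a l ih =>
      rw [List.foldr_cons, List.foldr_cons, Pd, PowerSeries.coeff_mk, ih]

lemma coeff_Zser (k : ℕ) :
    (PowerSeries.coeff (R := Fn N) k) (Zser N V μsq)
      = Phi N V μsq (MvPolynomial.C ((-1 : ℝ) ^ k / (Nat.factorial k : ℝ)) *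
          (DD V μsq)^[k] 1) := by
  rw [Zser, PowerSeries.coeff_mk]
  funext J
  rw [Dop_iter]
  show _ * Phi N V μsq ((DD V μsq)^[k] 1) J = Phi N V μsq _ J
  unfold Phi
  rw [map_mul, MvPolynomial.eval_C]
  ring

lemma fold_pd_Phi (l : List (SrcIdx N)) (P : Pol N) :
    l.foldr (pd N) (Phi N V μsq P) = Phi N V μsq (l.foldr (dd V μsq) P) := by
  induction l with
  | nil => rfl
  | cons a l ih => rw [List.foldr_cons, List.foldr_cons, ih, pd_Phi]

lemma Zfree_zero : Zfree N V μsq 0 = 1 := by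
  simp [Zfree]

lemma Phi_zero (P : Pol N) : Phi N V μsq P 0 = MvPolynomial.eval (0 : SrcIdx N → ℝ) P := by
  rw [Phi, Zfree_zero, mul_one]

lemma sym_zero (a1 : Fin 3) (p1 p2 : Fin (N + 1)) (rest : List (SrcIdx N))
    (hnot : ((a1, p2, p1) : SrcIdx N) ∉ rest) :
    MvPolynomial.eval (0 : SrcIdx N → ℝ)
      (dd V μsq ((a1, p1, p2) : SrcIdx N) (rest.foldr (dd V μsq) (1 : Pol N))) = 0 := by
  have hmir : mir ((a1, p1, p2) : SrcIdx N) = ((a1, p2, p1) : SrcIdx N) := rfl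
  rw [fold_dd_comm, dd_one, hmir,
    ← mul_one (MvPolynomial.X ((a1, p2, p1) : SrcIdx N)), fold_Cmul,
    fold_X_notmem V μsq rest _ hnot]
  simp

lemma sym_succ (a1 : Fin 3) (p1 p2 : Fin (N + 1)) (rest : List (SrcIdx N))
    (hnot : ((a1, p2, p1) : SrcIdx N) ∉ rest) (k : ℕ) :
    MvPolynomial.eval (0 : SrcIdx N → ℝ)
      (dd V μsq ((a1, p1, p2) : SrcIdx N) (rest.foldr (dd V μsq) ((DD V μsq)^[k + 1] 1)))
    = V / Hev N V μsq p1 p2 * (((k : ℝ) + 1) / V ^ 2) *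
        ∑ b : Fin 3, ∑ c : Fin 3, sigma3 a1 b c *
          ∑ n : Fin (N + 1), MvPolynomial.eval (0 : SrcIdx N → ℝ)
            (rest.foldr (dd V μsq)
              (dd V μsq (b, p1, n) (dd V μsq (c, n, p2) ((DD V μsq)^[k] 1)))) := by
  have hmir : mir ((a1, p1, p2) : SrcIdx N) = ((a1, p2, p1) : SrcIdx N) := rfl
  have hHc : Hc V μsq ((a1, p1, p2) : SrcIdx N) = Hev N V μsq p1 p2 := rfl
  rw [fold_dd_comm, dd_DD_iter, dd_one, hmir, hHc, DD_iter_Cmul,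
    DD_pow_X V μsq a1 p1 p2 k, fold_Cmul, fold_add,
    fold_X_notmem V μsq rest _ hnot, fold_Cmul]
  rw [TAop, fold_sum]
  simp only [fold_sum, fold_Cmul, map_mul, map_add, map_sum, MvPolynomial.eval_C,
    MvPolynomial.eval_X, Pi.zero_apply, zero_mul, mul_zero, zero_add, add_zero]
  ring

lemma SD_main {N : ℕ} {V μsq : ℝ} (hV : 0 < V) (hμ : 0 < μsq)
    (a1 : Fin 3) (p1 p2 : Fin (N + 1)) (rest : List (SrcIdx N))
    (hnot : ((a1, p2, p1) : SrcIdx N) ∉ rest) :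
    ev0 N (List.foldr (Pd N) (Zser N V μsq) (((a1, p1, p2) : SrcIdx N) :: rest))
      = -(PowerSeries.X *
          PowerSeries.C (R := ℝ) (1 / (Hev N V μsq p1 p2 * V)) *
          ∑ b : Fin 3, ∑ c : Fin 3,
            PowerSeries.C (R := ℝ) (sigma3 a1 b c) *
              ∑ n : Fin (N + 1),
                ev0 N (List.foldr (Pd N) (Zser N V μsq)
                  (rest ++ [((b, p1, n) : SrcIdx N), ((c, n, p2) : SrcIdx N)]))) := by
  classical
  have hVne : V ≠ 0 := ne_of_gt hV
  have hE : ∀ q : Fin (N + 1), 0 < Eev N V μsq q := by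
    intro q
    have h0 : (0 : ℝ) ≤ (q : ℝ) := by positivity
    have h1 : (0 : ℝ) ≤ (q : ℝ) / V := div_nonneg h0 hV.le
    have h2 : 0 < μsq / 2 := by linarith
    unfold Eev; linarith
  have hHpos : 0 < Hev N V μsq p1 p2 := by
    have := hE p1; have := hE p2; unfold Hev; linarith
  have hHne : Hev N V μsq p1 p2 ≠ 0 := ne_of_gt hHpos
  have hev : ∀ x : Fn N, (Pi.evalRingHom (fun _ : SrcIdx N → ℝ => ℝ) 0) x = x 0 :=
    fun _ => rfl
  apply PowerSeries.ext
  intro k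
  rw [mul_assoc]
  simp only [ev0, PowerSeries.coeff_map, hev, coeff_fold_Pd, coeff_Zser,
    fold_pd_Phi, Phi_zero, map_neg]
  cases k with
  | zero =>
      rw [PowerSeries.coeff_zero_X_mul, List.foldr_cons, fold_Cmul, dd_Cmul, map_mul,
        MvPolynomial.eval_C, Function.iterate_zero_apply,
        sym_zero V μsq a1 p1 p2 rest hnot]
      simp
  | succ k =>
      rw [PowerSeries.coeff_succ_X_mul, PowerSeries.coeff_C_mul]
      simp only [map_sum, PowerSeries.coeff_C_mul, ev0, PowerSeries.coeff_map, hev,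
        coeff_fold_Pd, Pd, PowerSeries.coeff_mk, coeff_Zser, pd_Phi, fold_pd_Phi,
        Phi_zero, List.foldr_append, List.foldr_cons, List.foldr_nil, dd_Cmul,
        fold_Cmul, map_mul, MvPolynomial.eval_C]
      rw [sym_succ V μsq a1 p1 p2 rest hnot k]
      have hs : ((-1 : ℝ) ^ (k + 1) / (Nat.factorial (k + 1) : ℝ)) *
            (V / Hev N V μsq p1 p2 * (((k : ℝ) + 1) / V ^ 2))
          = -(1 / (Hev N V μsq p1 p2 * V) * ((-1 : ℝ) ^ k / (Nat.factorial k : ℝ))) := by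
        have hf : ((Nat.factorial (k + 1) : ℝ)) = ((k : ℝ) + 1) * (Nat.factorial k : ℝ) := by
          rw [Nat.factorial_succ]; push_cast; ring
        have hk : ((k : ℝ) + 1) ≠ 0 := by positivity
        have hfk : (Nat.factorial k : ℝ) ≠ 0 := Nat.cast_ne_zero.mpr (Nat.factorial_ne_zero k)
        rw [hf]
        field_simp
        ring
      set B := ∑ b : Fin 3, ∑ c : Fin 3, sigma3 a1 b c *
          ∑ n : Fin (N + 1), MvPolynomial.eval (0 : SrcIdx N → ℝ)
            (rest.foldr (dd V μsq)
              (dd V μsq (b, p1, n) (dd V μsq (c, n, p2) ((DD V μsq)^[k] 1)))) with hB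
  -- RHS: pull the constant out of the sums
      have hpull : (∑ b : Fin 3, ∑ c : Fin 3, sigma3 a1 b c *
            ∑ n : Fin (N + 1), ((-1 : ℝ) ^ k / (Nat.factorial k : ℝ)) *
              MvPolynomial.eval (0 : SrcIdx N → ℝ)
                (rest.foldr (dd V μsq)
                  (dd V μsq (b, p1, n) (dd V μsq (c, n, p2) ((DD V μsq)^[k] 1)))))
          = ((-1 : ℝ) ^ k / (Nat.factorial k : ℝ)) * B := by
        rw [hB, Finset.mul_sum]
        refine Finset.sum_congr rfl fun b _ => ?_
        rw [Finset.mul_sum]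
        refine Finset.sum_congr rfl fun c _ => ?_
        rw [← Finset.mul_sum]
        ring
      rw [hpull]
      linear_combination B * hs

end SD

/-- First step of the Schwinger–Dyson equation for the `M`-point function:
for `M ≥ 3`, colours `a₁,…,a_M` and pairwise distinct indices `p₁,…,p_M` (cyclically,
`p_{M+1} = p₁`), the evaluated `M`-th derivative of `Z` at `J = 0` equals
`−(λ'/(H_{p₁p₂}V)) Σ_{b,c} σ_{a₁bc} Σ_n` of the evaluated `(M+1)`-st derivative, in `ℝ[[λ']]`. -/
theorem schwinger_dyson_N_point_first_step (N : ℕ) (V μsq : ℝ) (hV : 0 < V) (hμ : 0 < μsq)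
    (M : ℕ) (hM : 3 ≤ M) (aa : Fin M → Fin 3) (p : Fin M → Fin (N + 1))
    (hinj : Function.Injective p) :
    ev0 N (List.foldr (Pd N) (Zser N V μsq)
        (List.ofFn fun i : Fin M =>
          ((aa i, p i, p ⟨(i.val + 1) % M, Nat.mod_lt _ (by omega)⟩) : SrcIdx N)))
      = -(PowerSeries.X *
          PowerSeries.C (R := ℝ)
            (1 / (Hev N V μsq (p ⟨0, by omega⟩) (p ⟨1, by omega⟩) * V)) *
          ∑ b : Fin 3, ∑ c : Fin 3,
            PowerSeries.C (R := ℝ) (sigma3 (aa ⟨0, by omega⟩) b c) *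
              ∑ n : Fin (N + 1),
                ev0 N (List.foldr (Pd N) (Zser N V μsq)
                  ((List.ofFn fun i : Fin M =>
                      ((aa i, p i, p ⟨(i.val + 1) % M, Nat.mod_lt _ (by omega)⟩) : SrcIdx N)).tail
                    ++ [(b, p ⟨0, by omega⟩, n), (c, n, p ⟨1, by omega⟩)]))) := by
  classical
  obtain ⟨m, rfl⟩ : ∃ m, M = m + 3 := ⟨M - 3, by omega⟩
  have hnot : ((aa ⟨0, by omega⟩, p ⟨1, by omega⟩, p ⟨0, by omega⟩) : SrcIdx N) ∉
      List.ofFn (fun i : Fin (m + 2) =>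
        ((aa i.succ, p i.succ,
          p ⟨((i.succ : Fin (m + 3)).val + 1) % (m + 3), Nat.mod_lt _ (by omega)⟩) :
            SrcIdx N)) := by
    intro hmem
    rw [List.mem_ofFn] at hmem
    obtain ⟨i, hi⟩ := hmem
    have h2 : p i.succ = p ⟨1, by omega⟩ := congrArg (fun x : SrcIdx N => x.2.1) hi
    have h3 : p ⟨((i.succ : Fin (m + 3)).val + 1) % (m + 3), Nat.mod_lt _ (by omega)⟩
        = p ⟨0, by omega⟩ := congrArg (fun x : SrcIdx N => x.2.2) hi
    have hv1 : i.succ = (⟨1, by omega⟩ : Fin (m + 3)) := hinj h2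
    have hv1' : (i : ℕ) + 1 = 1 := by
      have := congrArg Fin.val hv1
      simpa [Fin.val_succ] using this
    have hv2 := congrArg Fin.val (hinj h3)
    simp only [Fin.val_succ] at hv2
    have h2m : ((i : ℕ) + 1 + 1) % (m + 3) = 2 := by
      have hi0 : (i : ℕ) = 0 := by omega
      rw [hi0]
      exact Nat.mod_eq_of_lt (by omega)
    rw [h2m] at hv2
    exact two_ne_zero hv2
  rw [List.ofFn_succ]
  simp only [List.tail_cons]
  exact SD_main hV hμ (aa ⟨0, by omega⟩) (p ⟨0, by omega⟩) (p ⟨1, by omega⟩) _ hnot
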